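/- Let γ : ℝ → E be a twice differentiable unit-speed curve such that for each α ∈ {1,…,s} the component γ'_{2n+α}(t) equals a constant cos θ_α, and suppose Σ_{α=1}^{s} cos²θ_α = 1. Then γ'(t) = Σ_{α=1}^{s} cos θ_α · e_{2n+α} for all t (so γ is an integral curve of the constant vector field Σ_α cos θ_α ξ_α), γ is a geodesic (γ''(t) = 0 for all t), and γ satisfies the Lorentz equation γ''(t) = -q·φ(γ'(t)) for every q ∈ ℝ. -/

import Mathlib

open scoped RealInnerProductSpace

/-- The structure tensor `φ` of the standard `C`-manifold structure on `ℝ^{2n+s}`: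
`(φv)_i = v_{n+i}`, `(φv)_{n+i} = -v_i` for `0 ≤ i < n`, and `(φv)_{2n+α} = 0`. -/
noncomputable def phi (n s : ℕ) (v : EuclideanSpace ℝ (Fin (2*n+s))) :
    EuclideanSpace ℝ (Fin (2*n+s)) := WithLp.toLp 2 fun k =>
  if _h1 : (k : ℕ) < n then v ⟨n + (k : ℕ), by omega⟩
  else if _h2 : (k : ℕ) < 2*n then -v ⟨(k : ℕ) - n, by omega⟩
  else 0

/-- The index `2n+α` of the characteristic direction `ξ_α = e_{2n+α}`. -/
def idxA (n s : ℕ) (α : Fin s) : Fin (2*n+s) := ⟨2*n + (α : ℕ), by omega⟩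

/-- The index `i` for `1 ≤ i ≤ n` (0-based). -/
def idxI (n s : ℕ) (i : Fin n) : Fin (2*n+s) := ⟨(i : ℕ), by omega⟩

/-- The index `n+i` for `1 ≤ i ≤ n` (0-based). -/
def idxNI (n s : ℕ) (i : Fin n) : Fin (2*n+s) := ⟨n + (i : ℕ), by omega⟩

/-- Equality case of the slant inequality: a unit-speed `θ_α`-slant curve with
`Σ_α cos²θ_α = 1` is an integral curve of `Σ_α cos θ_α · ξ_α`, is a geodesic, and satisfies
the Lorentz equation `γ'' = -q·φ(γ')` for every charge `q`. -/
theorem slant_curve_equality_case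
    (n s : ℕ) (hn : 0 < n) (hs : 0 < s)
    (γ : ℝ → EuclideanSpace ℝ (Fin (2*n+s)))
    (hγ : Differentiable ℝ γ) (hγ' : Differentiable ℝ (deriv γ))
    (hunit : ∀ t : ℝ, ‖deriv γ t‖ = 1)
    (θ : Fin s → ℝ)
    (hslant : ∀ t : ℝ, ∀ α : Fin s, deriv γ t (idxA n s α) = Real.cos (θ α))
    (hsum : ∑ α : Fin s, Real.cos (θ α) ^ 2 = 1) :
    (∀ t : ℝ, deriv γ t =
        ∑ α : Fin s, Real.cos (θ α) • EuclideanSpace.single (idxA n s α) (1 : ℝ)) ∧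
    (∀ t : ℝ, deriv (deriv γ) t = 0) ∧
    (∀ q : ℝ, ∀ t : ℝ, deriv (deriv γ) t = (-q) • phi n s (deriv γ t)) := by
  classical
  set w : EuclideanSpace ℝ (Fin (2*n+s)) :=
    ∑ α : Fin s, Real.cos (θ α) • EuclideanSpace.single (idxA n s α) (1 : ℝ) with hw
  have hinj : Function.Injective (idxA n s) := by
    intro a b h
    have := Fin.mk.injEq .. ▸ h
    simp only [idxA, Fin.mk.injEq] at h
    exact Fin.ext (by omega)
  set S : Finset (Fin (2*n+s)) := Finset.univ.map ⟨idxA n s, hinj⟩ with hS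
  have hmem : ∀ k : Fin (2*n+s), k ∈ S ↔ 2*n ≤ (k : ℕ) := by
    intro k
    constructor
    · intro hk
      simp only [hS, Finset.mem_map, Function.Embedding.coeFn_mk] at hk
      obtain ⟨α, _, rfl⟩ := hk
      simp [idxA]
    · intro hk
      simp only [hS, Finset.mem_map, Function.Embedding.coeFn_mk]
      refine ⟨⟨(k : ℕ) - 2*n, by omega⟩, Finset.mem_univ _, ?_⟩
      exact Fin.ext (by simp [idxA]; omega)
  -- the key vanishing of non-characteristic components
  have hzero : ∀ t : ℝ, ∀ k : Fin (2*n+s), (k : ℕ) < 2*n → deriv γ t k = 0 := by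
    intro t k hk
    set v := deriv γ t with hv
    have hnorm : ∑ j, v j ^ 2 = 1 := by
      have h1 := hunit t
      have h2 : ‖v‖ ^ 2 = 1 := by rw [h1]; norm_num
      rw [EuclideanSpace.norm_eq, Real.sq_sqrt (by positivity)] at h2
      simpa [Real.norm_eq_abs, sq_abs] using h2
    have hSsum : ∑ j ∈ S, v j ^ 2 = 1 := by
      rw [hS, Finset.sum_map]
      simp only [Function.Embedding.coeFn_mk]
      rw [← hsum]
      exact Finset.sum_congr rfl (fun α _ => by rw [hv, hslant t α])
    have hcompl : ∑ j ∈ Sᶜ, v j ^ 2 = 0 := by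
      have := Finset.sum_add_sum_compl S (fun j => v j ^ 2)
      rw [hSsum, hnorm] at this
      linarith
    have hkc : k ∈ Sᶜ := by
      rw [Finset.mem_compl, hmem]; omega
    have := (Finset.sum_eq_zero_iff_of_nonneg
      (fun j _ => sq_nonneg (v j))).mp hcompl k hkc
    exact pow_eq_zero_iff (by norm_num) |>.mp this
  have hwk : ∀ k : Fin (2*n+s), (k : ℕ) < 2*n → w k = 0 := by
    intro k hk
    rw [hw, WithLp.ofLp_sum, Finset.sum_apply]
    apply Finset.sum_eq_zero
    intro α _
    have hne : k ≠ idxA n s α := by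
      intro h
      have : (k : ℕ) = 2*n + (α : ℕ) := by rw [h]; rfl
      omega
    simp [PiLp.smul_apply, EuclideanSpace.single_apply, hne]
  have hkey : ∀ t : ℝ, deriv γ t = w := by
    intro t
    ext k
    by_cases hk : (k : ℕ) < 2*n
    · rw [hzero t k hk, hwk k hk]
    · push_neg at hk
      set α₀ : Fin s := ⟨(k : ℕ) - 2*n, by omega⟩ with hα₀
      have hkα : k = idxA n s α₀ := Fin.ext (by simp [idxA, hα₀]; omega)
      rw [hkα, hslant t α₀, hw, WithLp.ofLp_sum, Finset.sum_apply, Finset.sum_eq_single α₀]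
      · simp [PiLp.smul_apply, EuclideanSpace.single_apply]
      · intro β _ hβ
        have hne : idxA n s α₀ ≠ idxA n s β := fun h => hβ (hinj h).symm
        simp [PiLp.smul_apply, EuclideanSpace.single_apply, hne]
      · intro h; exact absurd (Finset.mem_univ α₀) h
  have hderiv2 : ∀ t : ℝ, deriv (deriv γ) t = 0 := by
    intro t
    have : deriv γ = fun _ : ℝ => w := funext hkey
    rw [this, deriv_const]
  refine ⟨hkey, hderiv2, ?_⟩
  intro q t
  have hphi : phi n s (deriv γ t) = 0 := by
    ext k
    rw [hkey t]
    show phi n s w k = 0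
    unfold phi
    simp only [WithLp.ofLp_toLp]
    split_ifs with h1 h2
    · exact hwk _ (by simp; omega)
    · rw [hwk _ (by simp; omega)]; ring
    · rfl
  rw [hderiv2 t, hphi, smul_zero]
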